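/- Let (X, μ) be a measure space with μ a finite measure and μ(X) > 0, let λ : X → ℝ be measurable, and suppose there is λ₀ ∈ (0, 1) with |λ(x)| ≤ λ₀ for every x. Write a = (μ(X)).toReal, A = a + ∫ λ² dμ, and r₀ = (1/2)·log((1+λ₀)/(1−λ₀)). Then ∫_{−r₀}^{r₀} ( ∫ (cosh(r)² − λ(x)²·sinh(r)²) dμ(x) ) dr ≤ A·( λ₀/(1−λ₀²) + (1/2)·log((1+λ₀)/(1−λ₀)) ). (Theorem 1.2 / Theorem 3.5: vol(C(M³)) ≤ vol(M(r₀)) ≤ A_hyp(λ₀/(1−λ₀²) + ½log((1+λ₀)/(1−λ₀))).) -/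

import Mathlib

open MeasureTheory

theorem stmt_11 {X : Type*} [MeasurableSpace X] (μ : Measure X) [IsFiniteMeasure μ]
    (hμ : 0 < μ Set.univ) (lam : X → ℝ) (hmeas : Measurable lam)
    (lam₀ : ℝ) (hlam₀ : lam₀ ∈ Set.Ioo (0 : ℝ) 1) (hbound : ∀ x, |lam x| ≤ lam₀)
    (a A r₀ : ℝ) (ha : a = (μ Set.univ).toReal)
    (hA : A = a + ∫ x, (lam x) ^ 2 ∂μ)
    (hr₀ : r₀ = (1 / 2) * Real.log ((1 + lam₀) / (1 - lam₀))) :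
    (∫ r in (-r₀)..r₀, ∫ x, (Real.cosh r ^ 2 - (lam x) ^ 2 * Real.sinh r ^ 2) ∂μ)
      ≤ A * (lam₀ / (1 - lam₀ ^ 2) + (1 / 2) * Real.log ((1 + lam₀) / (1 - lam₀))) := by
  obtain ⟨h0, h1⟩ := hlam₀
  have h1l : (0:ℝ) < 1 - lam₀ := by linarith
  have h1p : (0:ℝ) < 1 + lam₀ := by linarith
  set I := ∫ x, (lam x) ^ 2 ∂μ with hIdef
  have hint : Integrable (fun x => (lam x) ^ 2) μ := by
    refine (integrable_const (lam₀ ^ 2)).mono' ((hmeas.pow_const 2).aestronglyMeasurable)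
      (Filter.Eventually.of_forall fun x => ?_)
    rw [Real.norm_eq_abs, abs_pow]
    exact pow_le_pow_left₀ (abs_nonneg _) (hbound x) 2
  have hInonneg : 0 ≤ I := integral_nonneg fun x => sq_nonneg _
  have hinner : ∀ r : ℝ,
      (∫ x, (Real.cosh r ^ 2 - (lam x) ^ 2 * Real.sinh r ^ 2) ∂μ)
        = a * Real.cosh r ^ 2 - I * Real.sinh r ^ 2 := by
    intro r
    rw [integral_sub (integrable_const _) (hint.mul_const _), integral_const,
      integral_mul_const, Measure.real_def, ← ha, smul_eq_mul, mul_comm a]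
  have hG : ∀ r : ℝ, HasDerivAt
      (fun r : ℝ => (a - I) / 2 * (Real.sinh r * Real.cosh r) + (a + I) / 2 * r)
      (a * Real.cosh r ^ 2 - I * Real.sinh r ^ 2) r := by
    intro r
    have h1 := ((Real.hasDerivAt_sinh r).mul (Real.hasDerivAt_cosh r)).const_mul ((a - I) / 2)
    have h2 := (hasDerivAt_id r).const_mul ((a + I) / 2)
    have := h1.add h2
    refine this.congr_deriv ?_
    have hcs := Real.cosh_sq_sub_sinh_sq r
    linear_combination (-((a + I) / 2)) * hcs
  have hFTC : (∫ r in (-r₀)..r₀, (a * Real.cosh r ^ 2 - I * Real.sinh r ^ 2))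
      = (a - I) * (Real.sinh r₀ * Real.cosh r₀) + (a + I) * r₀ := by
    rw [intervalIntegral.integral_eq_sub_of_hasDerivAt (fun r _ => hG r)
      (Continuous.intervalIntegrable (by continuity) _ _)]
    rw [Real.sinh_neg, Real.cosh_neg]
    ring
  have hval : Real.sinh r₀ * Real.cosh r₀ = lam₀ / (1 - lam₀ ^ 2) := by
    have ht : (0:ℝ) < (1 + lam₀) / (1 - lam₀) := div_pos h1p h1l
    have h2r : 2 * r₀ = Real.log ((1 + lam₀) / (1 - lam₀)) := by rw [hr₀]; ring
    have he : Real.exp (2 * r₀) = (1 + lam₀) / (1 - lam₀) := by rw [h2r, Real.exp_log ht]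
    have hen : Real.exp (-(2 * r₀)) = (1 - lam₀) / (1 + lam₀) := by
      rw [Real.exp_neg, he]
      exact inv_div _ _
    have hs : Real.sinh r₀ * Real.cosh r₀ = (Real.exp (2 * r₀) - Real.exp (-(2 * r₀))) / 4 := by
      rw [Real.sinh_eq, Real.cosh_eq]
      rw [show (2:ℝ) * r₀ = r₀ + r₀ by ring, show -(r₀ + r₀) = -r₀ + -r₀ by ring,
        Real.exp_add, Real.exp_add]
      ring
    rw [hs, he, hen]
    have hne1 : (1:ℝ) - lam₀ ≠ 0 := ne_of_gt h1l
    have hne2 : (1:ℝ) + lam₀ ≠ 0 := ne_of_gt h1p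
    have hne3 : (1:ℝ) - lam₀ ^ 2 ≠ 0 := by nlinarith
    field_simp
    ring
  calc (∫ r in (-r₀)..r₀, ∫ x, (Real.cosh r ^ 2 - (lam x) ^ 2 * Real.sinh r ^ 2) ∂μ)
      = (a - I) * (lam₀ / (1 - lam₀ ^ 2)) + (a + I) * r₀ := by
        rw [intervalIntegral.integral_congr (fun r _ => hinner r), hFTC, hval]
    _ ≤ (a + I) * (lam₀ / (1 - lam₀ ^ 2)) + (a + I) * r₀ := by
        have hc : 0 ≤ lam₀ / (1 - lam₀ ^ 2) := by
          apply div_nonneg h0.le; nlinarith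
        nlinarith
    _ = A * (lam₀ / (1 - lam₀ ^ 2) + (1 / 2) * Real.log ((1 + lam₀) / (1 - lam₀))) := by
        rw [hA, ← hr₀]; ring
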